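/- Define D : NC^B_2(2m) → NC^A_2(2m) by replacing, in each π, every negative B-pair ((−b,−a),(a,b)) (where ab < 0) by the positive B-pair ((−b,a),(−a,b)) and leaving positive B-pairs unchanged. Then D is a well-defined surjection, every negative B-pair of π is mapped to an outer B-pair of D(π), and for every π ∈ NC^A_2(2m) the fiber has cardinality #D^{−1}(π) = Σ_{i=0}^{#Out(π)} C(#Out(π), i) = 2^{#Out(π)}; moreover NC^B_2(2m) = ⊔_{π ∈ NC^A_2(2m)} D^{−1}(π). -/

import Mathlib

open scoped TensorProduct ComplexConjugate InnerProductSpace DirectSum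
open PiTensorProduct

noncomputable section

/-- Signed indices: `(i, true)` represents `i+1 ∈ {1,…,n}`, `(i, false)` represents `-(i+1)`. -/
abbrev SIdx (n : ℕ) := Fin n × Bool

/-- The reflection `k ↦ -k` on signed indices. -/
def negIdx {n : ℕ} (p : SIdx n) : SIdx n := (p.1, !p.2)

/-- The signed integer value of a signed index. -/
def sval {n : ℕ} (p : SIdx n) : ℤ := if p.2 then (p.1 : ℤ) + 1 else -((p.1 : ℤ) + 1)

/-- The hyperoctahedral group `B(n)`, realized as the group of permutations `σ` of
`[±n] = {-n,…,-1,1,…,n}` with `σ(-k) = -σ(k)`. -/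
def hyperoctahedral (n : ℕ) : Subgroup (Equiv.Perm (SIdx n)) where
  carrier := {σ | ∀ p, σ (negIdx p) = negIdx (σ p)}
  one_mem' := fun _ => rfl
  mul_mem' := by
    intro σ τ hσ hτ p
    simp only [Equiv.Perm.mul_apply, hτ p, hσ (τ p)]
  inv_mem' := by
    intro σ hσ p
    have := hσ (σ⁻¹ p)
    rw [show σ (σ⁻¹ p) = p from σ.apply_symm_apply p] at this
    have h2 : σ⁻¹ (σ (negIdx (σ⁻¹ p))) = σ⁻¹ (negIdx p) := by rw [this]
    simpa using h2.symm

instance (n : ℕ) : DecidablePred (· ∈ hyperoctahedral n) := fun σ =>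
  decidable_of_iff (∀ p, σ (negIdx p) = negIdx (σ p)) Iff.rfl

/-- `l₁(σ)`: the number of negative inversions, `#{1 ≤ i ≤ n : σ(i) < 0}`. -/
def ninv {n : ℕ} (σ : Equiv.Perm (SIdx n)) : ℕ :=
  (Finset.univ.filter fun i : Fin n => sval (σ (i, true)) < 0).card

/-- `l₂(σ)`: the number of positive inversions, i.e. the number of elements of
`R₂⁺ = {(i,j) : 1 ≤ i < j ≤ n} ∪ {(i,-j) : 1 ≤ i < j ≤ n}` (identified with the long
positive roots `e_j - e_i`, `e_i + e_j`) sent by `σ` into `R₂⁻ = -R₂⁺`. -/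
def pinv {n : ℕ} (σ : Equiv.Perm (SIdx n)) : ℕ :=
  (Finset.univ.filter fun ij : Fin n × Fin n =>
      ij.1 < ij.2 ∧ sval (σ (ij.2, true)) < sval (σ (ij.1, true))).card +
  (Finset.univ.filter fun ij : Fin n × Fin n =>
      ij.1 < ij.2 ∧ sval (σ (ij.1, true)) < sval (σ (ij.2, false))).card

variable (H : Type*) [NormedAddCommGroup H] [InnerProductSpace ℂ H]

/-- `K_n = H^{⊗2n}`, with the `2n` tensor factors indexed by `[±n]`. -/
abbrev KSp (n : ℕ) : Type _ := ⨂[ℂ] (_ : SIdx n), H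

/-- The action of a permutation of `[±n]` on `K_n`, permuting the tensor factors:
on simple tensors `(σ x)_i = x_{σ⁻¹(i)}`. -/
def permB {n : ℕ} (σ : Equiv.Perm (SIdx n)) : KSp H n ≃ₗ[ℂ] KSp H n :=
  PiTensorProduct.reindex ℂ (fun _ : SIdx n => H) σ

/-- The type-B symmetrization operator `P_{α,q}^{(n)} = ∑_{σ ∈ B(n)} α^{l₁(σ)} q^{l₂(σ)} σ`. -/
def symB (n : ℕ) (α q : ℝ) : Module.End ℂ (KSp H n) :=
  ∑ σ : hyperoctahedral n,
    (((α : ℂ) ^ ninv (σ : Equiv.Perm (SIdx n))) * ((q : ℂ) ^ pinv (σ : Equiv.Perm (SIdx n)))) •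
      (permB H (σ : Equiv.Perm (SIdx n))).toLinearMap

/-- A real structure (conjugation) on `H`: `H` is the complexification of the
real Hilbert space `H_ℝ` of its fixed points. -/
structure RealStructure where
  J : H →ₗ⋆[ℂ] H
  invol : ∀ v, J (J v) = v
  inner_map : ∀ u v, ⟪J u, J v⟫_ℂ = ⟪v, u⟫_ℂ

/-- The set `P^B_{1,2}(N)` of type-B set partitions of `[±N]` into singletons and pairs,
encoded as involutions `m` of `[±N]`: the 2-element orbits `{p, m p}` are the pair blocks and
the fixed points are the singletons.  The conditions say that `m` is an involution, that the
partition is invariant under reflection (`π̄ = π`), and that no pair block equals its own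
reflection (`V ≠ V̄`). -/
def PB12 (N : ℕ) : Finset (SIdx N → SIdx N) :=
  Finset.univ.filter fun m =>
    (∀ p, m (m p) = p) ∧ (∀ p, m (negIdx p) = negIdx (m p)) ∧ (∀ p, m p ≠ negIdx p)

/-- The set `P^B_2(N)` of type-B pair partitions of `[±N]` (no singleton blocks). -/
def PB2 (N : ℕ) : Finset (SIdx N → SIdx N) := (PB12 N).filter fun m => ∀ p, m p ≠ p

/-- `b` is the canonical representative of a B-pair `((-b,-a),(a,b))` of `m` (with
`-b < b`, `|a| < |b|`): `b` is the element of largest absolute value of the two blocks which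
is positive, and `a = m b`. -/
def isRep {N : ℕ} (m : SIdx N → SIdx N) (b : SIdx N) : Prop :=
  0 < sval b ∧ |sval (m b)| < sval b

instance {N : ℕ} (m : SIdx N → SIdx N) (b : SIdx N) : Decidable (isRep m b) :=
  decidable_of_iff (0 < sval b ∧ |sval (m b)| < sval b) Iff.rfl

/-- `Nb(π)`: the number of negative B-pairs `((-b,-a),(a,b))` of `π` (those with `a·b < 0`). -/
def NbB {N : ℕ} (m : SIdx N → SIdx N) : ℕ :=
  (Finset.univ.filter fun b : SIdx N => isRep m b ∧ sval (m b) < 0).card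

/-- `Cr(π)`: the number of crossings of B-pairs: the number of (ordered) pairs of B-pairs
`((V̄,V),(W̄,W))` with `V` crossing `W`, plus the number of (mirror-classes of) pairs of
B-pairs with `V̄` crossing `W` (pairs `(i,j)`, `(k,l)` cross when `i<k<j<l`). -/
def CrB {N : ℕ} (m : SIdx N → SIdx N) : ℕ :=
  (Finset.univ.filter fun bc : SIdx N × SIdx N =>
      isRep m bc.1 ∧ isRep m bc.2 ∧
      sval (m bc.1) < sval (m bc.2) ∧ sval (m bc.2) < sval bc.1 ∧ sval bc.1 < sval bc.2).card +
  (Finset.univ.filter fun bc : SIdx N × SIdx N =>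
      isRep m bc.1 ∧ isRep m bc.2 ∧ sval bc.1 < sval bc.2 ∧
      -sval bc.1 < sval (m bc.2) ∧ sval (m bc.2) < -sval (m bc.1) ∧
      -sval (m bc.1) < sval bc.2).card

/-- `Cs(π)`: the number of pairs (B-singleton `((-v),(v))`, covering B-pair `(W̄,W)`) such
that `W` covers `(v)`, plus the number of those such that `W` covers `(-v)`. -/
def CsB {N : ℕ} (m : SIdx N → SIdx N) : ℕ :=
  (Finset.univ.filter fun sc : SIdx N × SIdx N =>
      (m sc.1 = sc.1 ∧ 0 < sval sc.1) ∧ isRep m sc.2 ∧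
      sval (m sc.2) < sval sc.1 ∧ sval sc.1 < sval sc.2).card +
  (Finset.univ.filter fun sc : SIdx N × SIdx N =>
      (m sc.1 = sc.1 ∧ 0 < sval sc.1) ∧ isRep m sc.2 ∧
      sval (m sc.2) < -sval sc.1 ∧ -sval sc.1 < sval sc.2).card

/-- The set of outer B-pairs of `π` (represented by their canonical representatives):
B-pairs not covered by another B-pair. -/
def OutB {N : ℕ} (m : SIdx N → SIdx N) : Finset (SIdx N) :=
  Finset.univ.filter fun b : SIdx N => isRep m b ∧
    ∀ c : SIdx N, isRep m c → ¬(sval (m c) < sval (m b) ∧ sval b < sval c)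

/-- `NC^B_2(N)`: non-crossing type-B pair partitions of `[±N]`. -/
def NCB (N : ℕ) : Finset (SIdx N → SIdx N) := (PB2 N).filter fun m => CrB m = 0

/-- `NC^A_2(N)`: non-crossing type-B pair partitions all of whose B-pairs are positive. -/
def NCA (N : ℕ) : Finset (SIdx N → SIdx N) :=
  (NCB N).filter fun m => ∀ b, isRep m b → 0 < sval (m b)

/-- The map `D`: replace every negative B-pair `((-b,-a),(a,b))` (`ab < 0`) by the positive
B-pair `((-b,a),(-a,b))`, and leave positive B-pairs unchanged.  In the involution encoding
this sends `p` to `-(m p)` when `p` and `m p` have opposite signs, and to `m p` otherwise. -/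
def Dmap {N : ℕ} (m : SIdx N → SIdx N) : SIdx N → SIdx N :=
  fun p => if sval p * sval (m p) < 0 then negIdx (m p) else m p


section Lemmas
variable {N : ℕ}

@[simp] lemma negIdx_negIdx (p : SIdx N) : negIdx (negIdx p) = p := by
  simp [negIdx]

@[simp] lemma sval_negIdx (p : SIdx N) : sval (negIdx p) = -sval p := by
  rcases p with ⟨i, b⟩; cases b <;> simp [sval, negIdx]

lemma sval_ne_zero (p : SIdx N) : sval p ≠ 0 := by
  rcases p with ⟨i, b⟩; cases b <;> simp [sval] <;> omega

lemma sval_inj {p q : SIdx N} (h : sval p = sval q) : p = q := by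
  rcases p with ⟨i, b⟩; rcases q with ⟨j, c⟩
  cases b <;> cases c <;> simp [sval] at h ⊢ <;>
    first
      | (exact Fin.ext (by omega))
      | (exfalso; omega)

lemma abs_sval (p : SIdx N) : |sval p| = (p.1 : ℤ) + 1 := by
  rcases p with ⟨i, b⟩
  have h : (0:ℤ) ≤ (i:ℤ) + 1 := by positivity
  cases b
  · show |(-((i:ℤ) + 1))| = _
    rw [abs_neg, abs_of_nonneg h]
  · show |((i:ℤ) + 1)| = _
    rw [abs_of_nonneg h]

lemma eq_or_neg_of_abs_eq {p q : SIdx N} (h : |sval p| = |sval q|) :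
    p = q ∨ p = negIdx q := by
  rcases abs_eq_abs.1 h with h | h
  · exact Or.inl (sval_inj h)
  · right; apply sval_inj; rw [sval_negIdx, h]

lemma neg_of_sval_eq_neg {p q : SIdx N} (h : sval p = -sval q) : p = negIdx q := by
  apply sval_inj; rw [sval_negIdx, h]


lemma mem_PB2_iff {m : SIdx N → SIdx N} :
    m ∈ PB2 N ↔ (∀ p, m (m p) = p) ∧ (∀ p, m (negIdx p) = negIdx (m p)) ∧
      (∀ p, m p ≠ negIdx p) ∧ (∀ p, m p ≠ p) := by
  simp [PB2, PB12, Finset.mem_filter, and_assoc]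

lemma mem_NCB_iff {m : SIdx N → SIdx N} :
    m ∈ NCB N ↔ m ∈ PB2 N ∧ CrB m = 0 := by
  simp [NCB]

lemma mem_NCA_iff {m : SIdx N → SIdx N} :
    m ∈ NCA N ↔ m ∈ NCB N ∧ ∀ b, isRep m b → 0 < sval (m b) := by
  simp [NCA]

/-- Bundled hypotheses for a type-B pair partition. -/
structure IsPB2 {N : ℕ} (m : SIdx N → SIdx N) : Prop where
  invol : ∀ p, m (m p) = p
  comm : ∀ p, m (negIdx p) = negIdx (m p)
  ne_neg : ∀ p, m p ≠ negIdx p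
  ne_self : ∀ p, m p ≠ p

lemma isPB2_of_mem {m : SIdx N → SIdx N} (h : m ∈ PB2 N) : IsPB2 m := by
  rw [mem_PB2_iff] at h; exact ⟨h.1, h.2.1, h.2.2.1, h.2.2.2⟩

lemma IsPB2.mem {m : SIdx N → SIdx N} (h : IsPB2 m) : m ∈ PB2 N :=
  mem_PB2_iff.2 ⟨h.invol, h.comm, h.ne_neg, h.ne_self⟩

namespace IsPB2
variable {m : SIdx N → SIdx N} (h : IsPB2 m)
include h

lemma abs_ne (p : SIdx N) : |sval (m p)| ≠ |sval p| := by
  intro habs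
  rcases eq_or_neg_of_abs_eq habs with h1 | h1
  · exact h.ne_self p h1
  · exact h.ne_neg p h1

/-- Every point lies in the orbit of a canonical representative. -/
lemma exists_rep (p : SIdx N) :
    ∃ b, isRep m b ∧ (p = b ∨ p = m b ∨ p = negIdx b ∨ p = negIdx (m b)) := by
  rcases lt_or_gt_of_ne (h.abs_ne p) with hlt | hlt
  · -- |sval (m p)| < |sval p| : the rep is p or -p
    by_cases hp : 0 < sval p
    · refine ⟨p, ⟨hp, by rwa [abs_of_pos hp] at hlt⟩, Or.inl rfl⟩
    · refine ⟨negIdx p, ⟨?_, ?_⟩, Or.inr <| Or.inr <| Or.inl (negIdx_negIdx p).symm⟩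
      · rw [sval_negIdx]
        have := sval_ne_zero p; omega
      · rw [h.comm, sval_negIdx, abs_neg, sval_negIdx]
        calc |sval (m p)| < |sval p| := hlt
        _ = -sval p := by rw [abs_of_nonpos]; omega
  · -- |sval p| < |sval (m p)| : the rep is m p or -(m p)
    by_cases hp : 0 < sval (m p)
    · refine ⟨m p, ⟨hp, ?_⟩, Or.inr <| Or.inl (h.invol p).symm⟩
      rw [h.invol, abs_of_pos hp] at *
      exact hlt
    · refine ⟨negIdx (m p), ⟨?_, ?_⟩, Or.inr <| Or.inr <| Or.inr ?_⟩
      · rw [sval_negIdx]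
        have := sval_ne_zero (m p); omega
      · rw [h.comm, h.invol, sval_negIdx, sval_negIdx, abs_neg]
        calc |sval p| < |sval (m p)| := hlt
        _ = -sval (m p) := by rw [abs_of_nonpos]; omega
      · rw [h.comm, h.invol, negIdx_negIdx]

/-- The canonical representative in an orbit is unique. -/
lemma rep_unique {b c : SIdx N} (hb : isRep m b) (hc : isRep m c)
    (horb : c = b ∨ c = m b ∨ c = negIdx b ∨ c = negIdx (m b)) : c = b := by
  obtain ⟨hb1, hb2⟩ := hb
  obtain ⟨hc1, hc2⟩ := hc
  rcases horb with rfl | rfl | rfl | rfl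
  · rfl
  · exfalso
    rw [h.invol] at hc2
    have h1 : |sval (m b)| = sval (m b) := abs_of_pos hc1
    have h2 : |sval b| = sval b := abs_of_pos hb1
    omega
  · exfalso; rw [sval_negIdx] at hc1; omega
  · exfalso
    rw [sval_negIdx] at hc1
    rw [h.comm, h.invol] at hc2
    simp only [sval_negIdx, abs_neg] at hc2
    have h2 : |sval b| = sval b := abs_of_pos hb1
    have h3 : -sval (m b) ≤ |sval (m b)| := neg_le_abs _
    omega

/-- Distinct representatives have blocks of distinct absolute values. -/
lemma rep_abs_inj {b c : SIdx N} (hb : isRep m b) (hc : isRep m c)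
    (habs : |sval (m b)| = |sval (m c)|) : b = c := by
  rcases eq_or_neg_of_abs_eq habs with h1 | h1
  · have := congrArg m h1; rwa [h.invol, h.invol] at this
  · have h2 : m b = m (negIdx c) := by rw [h.comm, h1]
    have := congrArg m h2; rw [h.invol, h.invol] at this
    subst this
    exfalso
    have hb1 := hb.1
    have hc1 := hc.1
    rw [sval_negIdx] at hb1
    omega

omit h in
lemma rep_sval_inj {b c : SIdx N} (hs : sval b = sval c) : b = c := sval_inj hs

end IsPB2

section Cross
variable {N : ℕ} {m : SIdx N → SIdx N}

lemma no_cross1 (h : CrB m = 0) {b c : SIdx N} (hb : isRep m b) (hc : isRep m c)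
    (h1 : sval (m b) < sval (m c)) (h2 : sval (m c) < sval b) (h3 : sval b < sval c) :
    False := by
  have hcard : (Finset.univ.filter fun bc : SIdx N × SIdx N =>
      isRep m bc.1 ∧ isRep m bc.2 ∧
      sval (m bc.1) < sval (m bc.2) ∧ sval (m bc.2) < sval bc.1 ∧
      sval bc.1 < sval bc.2).card = 0 := by
    unfold CrB at h; omega
  rw [Finset.card_eq_zero, Finset.filter_eq_empty_iff] at hcard
  exact hcard (Finset.mem_univ (b, c)) ⟨hb, hc, h1, h2, h3⟩

lemma no_cross2 (h : CrB m = 0) {b c : SIdx N} (hb : isRep m b) (hc : isRep m c)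
    (h1 : sval b < sval c) (h2 : -sval b < sval (m c)) (h3 : sval (m c) < -sval (m b))
    (h4 : -sval (m b) < sval c) : False := by
  have hcard : (Finset.univ.filter fun bc : SIdx N × SIdx N =>
      isRep m bc.1 ∧ isRep m bc.2 ∧ sval bc.1 < sval bc.2 ∧
      -sval bc.1 < sval (m bc.2) ∧ sval (m bc.2) < -sval (m bc.1) ∧
      -sval (m bc.1) < sval bc.2).card = 0 := by
    unfold CrB at h; omega
  rw [Finset.card_eq_zero, Finset.filter_eq_empty_iff] at hcard
  exact hcard (Finset.mem_univ (b, c)) ⟨hb, hc, h1, h2, h3, h4⟩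

lemma crB_eq_zero
    (H1 : ∀ b c : SIdx N, isRep m b → isRep m c → sval (m b) < sval (m c) →
      sval (m c) < sval b → sval b < sval c → False)
    (H2 : ∀ b c : SIdx N, isRep m b → isRep m c → sval b < sval c →
      -sval b < sval (m c) → sval (m c) < -sval (m b) → -sval (m b) < sval c → False) :
    CrB m = 0 := by
  unfold CrB
  have e1 : (Finset.univ.filter fun bc : SIdx N × SIdx N =>
      isRep m bc.1 ∧ isRep m bc.2 ∧
      sval (m bc.1) < sval (m bc.2) ∧ sval (m bc.2) < sval bc.1 ∧
      sval bc.1 < sval bc.2) = ∅ := by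
    rw [Finset.filter_eq_empty_iff]
    rintro ⟨b, c⟩ - ⟨hb, hc, h1, h2, h3⟩
    exact H1 b c hb hc h1 h2 h3
  have e2 : (Finset.univ.filter fun bc : SIdx N × SIdx N =>
      isRep m bc.1 ∧ isRep m bc.2 ∧ sval bc.1 < sval bc.2 ∧
      -sval bc.1 < sval (m bc.2) ∧ sval (m bc.2) < -sval (m bc.1) ∧
      -sval (m bc.1) < sval bc.2) = ∅ := by
    rw [Finset.filter_eq_empty_iff]
    rintro ⟨b, c⟩ - ⟨hb, hc, h1, h2, h3, h4⟩
    exact H2 b c hb hc h1 h2 h3 h4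
  rw [e1, e2]
  simp

end Cross

section DmapLemmas
variable {N : ℕ} {m : SIdx N → SIdx N}

lemma Dmap_apply (m : SIdx N → SIdx N) (p : SIdx N) :
    Dmap m p = if sval p * sval (m p) < 0 then negIdx (m p) else m p := rfl

lemma abs_sval_dmap (p : SIdx N) : |sval (Dmap m p)| = |sval (m p)| := by
  rw [Dmap_apply]; split_ifs <;> simp

lemma isRep_dmap_iff (b : SIdx N) : isRep (Dmap m) b ↔ isRep m b := by
  unfold isRep; rw [abs_sval_dmap]

lemma sval_dmap_rep {b : SIdx N} (hb : isRep m b) : sval (Dmap m b) = |sval (m b)| := by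
  rw [Dmap_apply]
  rcases lt_or_gt_of_ne (sval_ne_zero (m b)) with hneg | hpos
  · rw [if_pos (mul_neg_of_pos_of_neg hb.1 hneg), sval_negIdx, abs_of_neg hneg]
  · rw [if_neg (not_lt.2 (le_of_lt (mul_pos hb.1 hpos)))]
    exact (abs_of_pos hpos).symm

lemma IsPB2.dmap (h : IsPB2 m) : IsPB2 (Dmap m) := by
  constructor
  · intro p
    rw [Dmap_apply m p]
    split_ifs with hp
    · rw [Dmap_apply, h.comm, h.invol]
      have hcond : sval (negIdx (m p)) * sval (negIdx p) < 0 := by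
        rw [sval_negIdx, sval_negIdx, neg_mul_neg, mul_comm]; exact hp
      rw [if_pos hcond, negIdx_negIdx]
    · rw [Dmap_apply, h.invol]
      have hcond : ¬ sval (m p) * sval p < 0 := by rw [mul_comm]; exact hp
      rw [if_neg hcond]
  · intro p
    rw [Dmap_apply, Dmap_apply, h.comm]
    have hE : sval (negIdx p) * sval (negIdx (m p)) = sval p * sval (m p) := by
      rw [sval_negIdx, sval_negIdx]; ring
    rw [hE]
    split_ifs <;> rfl
  · intro p hcontra
    rw [Dmap_apply] at hcontra
    split_ifs at hcontra with hp
    · have := congrArg negIdx hcontra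
      rw [negIdx_negIdx, negIdx_negIdx] at this
      exact h.ne_self p this
    · exact h.ne_neg p hcontra
  · intro p hcontra
    rw [Dmap_apply] at hcontra
    split_ifs at hcontra with hp
    · have := congrArg negIdx hcontra
      rw [negIdx_negIdx] at this
      exact h.ne_neg p this
    · exact h.ne_self p hcontra

/-- Part 1: D is well defined from NCB to NCA. -/
lemma Dmap_mem_NCA (hm : m ∈ NCB N) : Dmap m ∈ NCA N := by
  obtain ⟨hP2, hCr⟩ := mem_NCB_iff.1 hm
  have h := isPB2_of_mem hP2
  rw [mem_NCA_iff, mem_NCB_iff]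
  refine ⟨⟨h.dmap.mem, ?_⟩, ?_⟩
  · apply crB_eq_zero
    · intro b c hb hc h1 h2 h3
      rw [isRep_dmap_iff] at hb hc
      rw [sval_dmap_rep hb, sval_dmap_rep hc] at h1
      rw [sval_dmap_rep hc] at h2
      have l1 := le_abs_self (sval (m b))
      have l2 := neg_le_abs (sval (m b))
      rcases lt_or_gt_of_ne (sval_ne_zero (m c)) with hc' | hc'
      · have e2 := abs_of_neg hc'
        exact no_cross2 hCr hb hc h3 (by omega) (by omega) (by omega)
      · have e2 := abs_of_pos hc'
        exact no_cross1 hCr hb hc (by omega) (by omega) h3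
    · intro b c hb hc h1 h2 h3 h4
      rw [isRep_dmap_iff] at hb hc
      rw [sval_dmap_rep hb] at h3 h4
      rw [sval_dmap_rep hc] at h2 h3
      have l1 := abs_nonneg (sval (m b))
      have l2 := abs_nonneg (sval (m c))
      omega
  · intro b hb
    rw [isRep_dmap_iff] at hb
    rw [sval_dmap_rep hb]
    exact abs_pos.2 (sval_ne_zero _)

/-- Part 3: negative B-pairs become outer B-pairs of the image. -/
lemma neg_rep_outer (hm : m ∈ NCB N) {b : SIdx N} (hb : isRep m b)
    (hneg : sval (m b) < 0) : b ∈ OutB (Dmap m) := by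
  obtain ⟨hP2, hCr⟩ := mem_NCB_iff.1 hm
  rw [OutB, Finset.mem_filter]
  refine ⟨Finset.mem_univ _, (isRep_dmap_iff _).2 hb, ?_⟩
  rintro c hc ⟨h1, h2⟩
  rw [isRep_dmap_iff] at hc
  rw [sval_dmap_rep hb, sval_dmap_rep hc] at h1
  have e1 := abs_of_neg hneg
  have hb2 := hb.2
  have hb1 := hb.1
  rcases lt_or_gt_of_ne (sval_ne_zero (m c)) with hc' | hc'
  · have e2 := abs_of_neg hc'
    exact no_cross1 hCr hb hc (by omega) (by omega) h2
  · have e2 := abs_of_pos hc'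
    exact no_cross2 hCr hb hc h2 (by omega) (by omega) (by omega)

end DmapLemmas

section Fiber
variable {N : ℕ}

/-- The four-point orbit of a representative. -/
def InOrbit (m : SIdx N → SIdx N) (b p : SIdx N) : Prop :=
  p = b ∨ p = m b ∨ p = negIdx b ∨ p = negIdx (m b)

namespace IsPB2
variable {m : SIdx N → SIdx N} (h : IsPB2 m)
include h

lemma orbit_map {b p : SIdx N} (horb : InOrbit m b p) : InOrbit m b (m p) := by
  rcases horb with rfl | rfl | rfl | rfl
  · exact Or.inr (Or.inl rfl)
  · exact Or.inl (h.invol b)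
  · exact Or.inr (Or.inr (Or.inr (h.comm b)))
  · refine Or.inr (Or.inr (Or.inl ?_))
    rw [h.comm, h.invol]

omit h in
lemma orbit_neg {b p : SIdx N} (horb : InOrbit m b p) : InOrbit m b (negIdx p) := by
  rcases horb with rfl | rfl | rfl | rfl
  · exact Or.inr (Or.inr (Or.inl rfl))
  · exact Or.inr (Or.inr (Or.inr rfl))
  · exact Or.inl (negIdx_negIdx b)
  · exact Or.inr (Or.inl (negIdx_negIdx _))

lemma orbit_prod {b p : SIdx N} (horb : InOrbit m b p) :
    sval p * sval (m p) = sval b * sval (m b) := by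
  rcases horb with rfl | rfl | rfl | rfl
  · rfl
  · rw [h.invol]; ring
  · rw [h.comm, sval_negIdx, sval_negIdx]; ring
  · rw [h.comm, h.invol, sval_negIdx, sval_negIdx]; ring

lemma orbit_dmap {b p : SIdx N} (horb : InOrbit m b p) : InOrbit m b (Dmap m p) := by
  rw [Dmap_apply]
  split_ifs
  · exact orbit_neg (h.orbit_map horb)
  · exact h.orbit_map horb

end IsPB2

variable {π : SIdx N → SIdx N}

lemma mem_OutB_iff {b : SIdx N} : b ∈ OutB π ↔ isRep π b ∧
    ∀ c : SIdx N, isRep π c → ¬(sval (π c) < sval (π b) ∧ sval b < sval c) := by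
  simp [OutB]

lemma pos_prod (hπ : π ∈ NCA N) (p : SIdx N) : 0 < sval p * sval (π p) := by
  have hP := isPB2_of_mem (mem_NCB_iff.1 (mem_NCA_iff.1 hπ).1).1
  have hpos := (mem_NCA_iff.1 hπ).2
  obtain ⟨b, hb, horb⟩ := hP.exists_rep p
  have hb2 := hpos b hb
  have := hP.orbit_prod horb
  rw [this]
  exact mul_pos hb.1 hb2

lemma Dmap_id (hπ : π ∈ NCA N) : Dmap π = π := by
  funext p
  rw [Dmap_apply, if_neg (not_lt.2 (le_of_lt (pos_prod hπ p)))]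

/-- The condition that the block of `p` is one of the flipped blocks. -/
def FlipC (π : SIdx N → SIdx N) (S : Finset (SIdx N)) (p : SIdx N) : Prop :=
  p ∈ S ∨ π p ∈ S ∨ negIdx p ∈ S ∨ negIdx (π p) ∈ S

instance (π : SIdx N → SIdx N) (S : Finset (SIdx N)) (p : SIdx N) :
    Decidable (FlipC π S p) := by unfold FlipC; infer_instance

/-- The partition obtained from `π` by flipping the B-pairs with representatives in `S`. -/
def flipSet (π : SIdx N → SIdx N) (S : Finset (SIdx N)) : SIdx N → SIdx N :=
  fun p => if FlipC π S p then negIdx (π p) else π p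

lemma flipSet_apply (S : Finset (SIdx N)) (p : SIdx N) :
    flipSet π S p = if FlipC π S p then negIdx (π p) else π p := rfl

lemma abs_sval_flipSet (S : Finset (SIdx N)) (p : SIdx N) :
    |sval (flipSet π S p)| = |sval (π p)| := by
  rw [flipSet_apply]; split_ifs <;> simp

lemma isRep_flipSet_iff (S : Finset (SIdx N)) (b : SIdx N) :
    isRep (flipSet π S) b ↔ isRep π b := by
  unfold isRep; rw [abs_sval_flipSet]

namespace IsPB2
variable (h : IsPB2 π) {S : Finset (SIdx N)}
include h

lemma flipC_neg (p : SIdx N) : FlipC π S (negIdx p) ↔ FlipC π S p := by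
  unfold FlipC
  rw [h.comm, negIdx_negIdx, negIdx_negIdx]
  tauto

lemma flipC_map (p : SIdx N) : FlipC π S (π p) ↔ FlipC π S p := by
  unfold FlipC
  rw [h.invol]
  tauto

lemma flipC_rep_iff (hS : ∀ s ∈ S, isRep π s) {b : SIdx N} (hb : isRep π b) :
    FlipC π S b ↔ b ∈ S := by
  constructor
  · rintro (hq | hq | hq | hq)
    · exact hq
    · rwa [h.rep_unique hb (hS _ hq) (Or.inr (Or.inl rfl))] at hq
    · rwa [h.rep_unique hb (hS _ hq) (Or.inr (Or.inr (Or.inl rfl)))] at hq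
    · rwa [h.rep_unique hb (hS _ hq) (Or.inr (Or.inr (Or.inr rfl)))] at hq
  · exact fun hq => Or.inl hq

lemma flipSet_isPB2 : IsPB2 (flipSet π S) := by
  constructor
  · intro p
    by_cases hp : FlipC π S p
    · rw [flipSet_apply S p, if_pos hp, flipSet_apply,
        if_pos (((h.flipC_neg _).trans (h.flipC_map p)).2 hp), h.comm, h.invol,
        negIdx_negIdx]
    · rw [flipSet_apply S p, if_neg hp, flipSet_apply,
        if_neg (fun hcon => hp ((h.flipC_map p).1 hcon)), h.invol]
  · intro p
    rw [flipSet_apply, flipSet_apply, h.comm]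
    by_cases hp : FlipC π S p
    · rw [if_pos ((h.flipC_neg p).2 hp), if_pos hp]
    · rw [if_neg (fun hcon => hp ((h.flipC_neg p).1 hcon)), if_neg hp]
  · intro p hcontra
    rw [flipSet_apply] at hcontra
    split_ifs at hcontra with hp
    · have := congrArg negIdx hcontra
      rw [negIdx_negIdx, negIdx_negIdx] at this
      exact h.ne_self p this
    · exact h.ne_neg p hcontra
  · intro p hcontra
    rw [flipSet_apply] at hcontra
    split_ifs at hcontra with hp
    · have := congrArg negIdx hcontra
      rw [negIdx_negIdx] at this
      exact h.ne_neg p this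
    · exact h.ne_self p hcontra

lemma sval_flipSet_rep (hS : ∀ s ∈ S, isRep π s) {b : SIdx N} (hb : isRep π b) :
    sval (flipSet π S b) = if b ∈ S then -sval (π b) else sval (π b) := by
  rw [flipSet_apply]
  by_cases hbS : b ∈ S
  · rw [if_pos ((h.flipC_rep_iff hS hb).2 hbS), if_pos hbS, sval_negIdx]
  · rw [if_neg (fun hcon => hbS ((h.flipC_rep_iff hS hb).1 hcon)), if_neg hbS]

end IsPB2

lemma Dmap_flipSet (hπ : π ∈ NCA N) (S : Finset (SIdx N)) :
    Dmap (flipSet π S) = π := by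
  funext p
  rw [Dmap_apply, flipSet_apply]
  by_cases hp : FlipC π S p
  · rw [if_pos hp, if_pos, negIdx_negIdx]
    rw [sval_negIdx]
    have := pos_prod hπ p
    nlinarith [this]
  · rw [if_neg hp, if_neg (not_lt.2 (le_of_lt (pos_prod hπ p)))]

end Fiber

section Fiber2
variable {N : ℕ} {π : SIdx N → SIdx N}

lemma flipSet_crB (hπ : π ∈ NCA N) {S : Finset (SIdx N)} (hS : S ⊆ OutB π) :
    CrB (flipSet π S) = 0 := by
  obtain ⟨hNCB, hposA⟩ := mem_NCA_iff.1 hπ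
  obtain ⟨hP2, hCr⟩ := mem_NCB_iff.1 hNCB
  have hP := isPB2_of_mem hP2
  have hSrep : ∀ s ∈ S, isRep π s := fun s hs => (mem_OutB_iff.1 (hS hs)).1
  have hOut : ∀ b ∈ S, ∀ c, isRep π c → ¬(sval (π c) < sval (π b) ∧ sval b < sval c) :=
    fun b hb => (mem_OutB_iff.1 (hS hb)).2
  have hdist : ∀ b c : SIdx N, isRep π b → isRep π c → b ≠ c → sval (π b) ≠ sval (π c) :=
    fun b c hb hc hne he => hne (hP.rep_abs_inj hb hc (by rw [he]))
  apply crB_eq_zero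
  · intro b c hb' hc' h1 h2 h3
    rw [isRep_flipSet_iff] at hb' hc'
    rw [hP.sval_flipSet_rep hSrep hb', hP.sval_flipSet_rep hSrep hc'] at h1
    rw [hP.sval_flipSet_rep hSrep hc'] at h2
    have hbpos := hposA b hb'
    have hcpos := hposA c hc'
    have hbc : b ≠ c := fun he => by subst he; split_ifs at h1 <;> omega
    by_cases hcS : c ∈ S
    · rw [if_pos hcS] at h1 h2
      by_cases hbS : b ∈ S
      · rw [if_pos hbS] at h1
        exact hOut b hbS c hc' ⟨by omega, h3⟩
      · rw [if_neg hbS] at h1; omega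
    · rw [if_neg hcS] at h1 h2
      by_cases hbS : b ∈ S
      · rw [if_pos hbS] at h1
        by_cases hlt : sval (π c) < sval (π b)
        · exact hOut b hbS c hc' ⟨hlt, h3⟩
        · have hx : sval (π b) < sval (π c) :=
            lt_of_le_of_ne (not_lt.1 hlt) (hdist b c hb' hc' hbc)
          exact no_cross1 hCr hb' hc' hx h2 h3
      · rw [if_neg hbS] at h1
        exact no_cross1 hCr hb' hc' h1 h2 h3
  · intro b c hb' hc' h1 h2 h3 h4
    rw [isRep_flipSet_iff] at hb' hc'
    rw [hP.sval_flipSet_rep hSrep hb'] at h3 h4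
    rw [hP.sval_flipSet_rep hSrep hc'] at h2 h3
    have hbpos := hposA b hb'
    have hcpos := hposA c hc'
    have hbc : b ≠ c := fun he => by subst he; omega
    by_cases hbS : b ∈ S
    · rw [if_pos hbS] at h3 h4
      by_cases hcS : c ∈ S
      · rw [if_pos hcS] at h2 h3
        by_cases hlt : sval (π c) < sval (π b)
        · exact hOut b hbS c hc' ⟨hlt, h1⟩
        · have hx : sval (π b) < sval (π c) :=
            lt_of_le_of_ne (not_lt.1 hlt) (hdist b c hb' hc' hbc)
          exact no_cross1 hCr hb' hc' hx (by omega) h1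
      · rw [if_neg hcS] at h2 h3
        exact hOut b hbS c hc' ⟨by omega, h1⟩
    · rw [if_neg hbS] at h3 h4
      by_cases hcS : c ∈ S
      · rw [if_pos hcS] at h2 h3
        exact no_cross1 hCr hb' hc' (by omega) (by omega) h1
      · rw [if_neg hcS] at h2 h3
        omega

lemma flipSet_mem_NCB (hπ : π ∈ NCA N) {S : Finset (SIdx N)} (hS : S ⊆ OutB π) :
    flipSet π S ∈ NCB N := by
  have hP := isPB2_of_mem (mem_NCB_iff.1 (mem_NCA_iff.1 hπ).1).1
  exact mem_NCB_iff.2 ⟨(hP.flipSet_isPB2 (S := S)).mem, flipSet_crB hπ hS⟩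

/-- The set of (representatives of) negative B-pairs. -/
def negSet (m : SIdx N → SIdx N) : Finset (SIdx N) :=
  Finset.univ.filter fun b => isRep m b ∧ sval (m b) < 0

lemma mem_negSet_iff {m : SIdx N → SIdx N} {b : SIdx N} :
    b ∈ negSet m ↔ isRep m b ∧ sval (m b) < 0 := by simp [negSet]

lemma negSet_subset_outB {m : SIdx N → SIdx N} (hm : m ∈ NCB N) :
    negSet m ⊆ OutB (Dmap m) := fun b hb => by
  rw [mem_negSet_iff] at hb
  exact neg_rep_outer hm hb.1 hb.2

lemma flipSet_negSet {m : SIdx N → SIdx N} (hm : m ∈ NCB N) :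
    flipSet (Dmap m) (negSet m) = m := by
  have hP := isPB2_of_mem (mem_NCB_iff.1 hm).1
  funext p
  obtain ⟨b, hb, horb⟩ := hP.exists_rep p
  have horb' : InOrbit m b p := horb
  have hprod := hP.orbit_prod horb'
  have hFiff : FlipC (Dmap m) (negSet m) p ↔ sval (m b) < 0 := by
    constructor
    · intro hF
      have key : ∀ q, InOrbit m b q → q ∈ negSet m → sval (m b) < 0 := by
        intro q hq hqmem
        rw [mem_negSet_iff] at hqmem
        have heq := hP.rep_unique hb hqmem.1 hq
        subst heq
        exact hqmem.2
      rcases hF with hF | hF | hF | hF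
      · exact key p horb' hF
      · exact key _ (hP.orbit_dmap horb') hF
      · exact key _ (IsPB2.orbit_neg horb') hF
      · exact key _ (IsPB2.orbit_neg (hP.orbit_dmap horb')) hF
    · intro hneg
      have hbmem : b ∈ negSet m := mem_negSet_iff.2 ⟨hb, hneg⟩
      have hprodb : sval b * sval (m b) < 0 := mul_neg_of_pos_of_neg hb.1 hneg
      rcases horb' with rfl | rfl | rfl | rfl
      · exact Or.inl hbmem
      · refine Or.inr (Or.inr (Or.inr ?_))
        have e : Dmap m (m b) = negIdx b := by
          rw [Dmap_apply, hP.invol, if_pos (by rw [mul_comm]; exact hprodb)]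
        rw [e, negIdx_negIdx]
        exact hbmem
      · refine Or.inr (Or.inr (Or.inl ?_))
        rw [negIdx_negIdx]
        exact hbmem
      · refine Or.inr (Or.inl ?_)
        have e : Dmap m (negIdx (m b)) = b := by
          rw [Dmap_apply, hP.comm, hP.invol, sval_negIdx, sval_negIdx]
          rw [if_pos (by rw [neg_mul_neg, mul_comm]; exact hprodb), negIdx_negIdx]
        rw [e]
        exact hbmem
  by_cases hF : FlipC (Dmap m) (negSet m) p
  · rw [flipSet_apply, if_pos hF]
    have hneg : sval p * sval (m p) < 0 := by
      rw [hprod]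
      exact mul_neg_of_pos_of_neg hb.1 (hFiff.1 hF)
    rw [Dmap_apply, if_pos hneg, negIdx_negIdx]
  · have hnotneg : ¬ sval p * sval (m p) < 0 := by
      intro hcon
      rw [hprod] at hcon
      exact hF (hFiff.2 (by nlinarith [hb.1]))
    rw [flipSet_apply, if_neg hF, Dmap_apply, if_neg hnotneg]

lemma negSet_flipSet (hπ : π ∈ NCA N) {S : Finset (SIdx N)} (hS : S ⊆ OutB π) :
    negSet (flipSet π S) = S := by
  have hP := isPB2_of_mem (mem_NCB_iff.1 (mem_NCA_iff.1 hπ).1).1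
  have hposA := (mem_NCA_iff.1 hπ).2
  have hSrep : ∀ s ∈ S, isRep π s := fun s hs => (mem_OutB_iff.1 (hS hs)).1
  ext b
  rw [mem_negSet_iff]
  constructor
  · rintro ⟨hb, hneg⟩
    rw [isRep_flipSet_iff] at hb
    rw [hP.sval_flipSet_rep hSrep hb] at hneg
    by_contra hbS
    rw [if_neg hbS] at hneg
    exact absurd (hposA b hb) (by omega)
  · intro hbS
    have hb := hSrep b hbS
    refine ⟨(isRep_flipSet_iff S b).2 hb, ?_⟩
    rw [hP.sval_flipSet_rep hSrep hb, if_pos hbS]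
    have := hposA b hb
    omega

lemma fiber_card (hπ : π ∈ NCA N) :
    ((NCB N).filter fun m => Dmap m = π).card = 2 ^ (OutB π).card := by
  rw [← Finset.card_powerset]
  refine (Finset.card_bij' (fun S _ => flipSet π S)
    (fun m _ => negSet m) ?_ ?_ ?_ ?_).symm
  · intro S hS
    rw [Finset.mem_powerset] at hS
    exact Finset.mem_filter.2 ⟨flipSet_mem_NCB hπ hS, Dmap_flipSet hπ S⟩
  · intro m hm
    rw [Finset.mem_filter] at hm
    rw [Finset.mem_powerset]
    have := negSet_subset_outB hm.1
    rwa [hm.2] at this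
  · intro S hS
    rw [Finset.mem_powerset] at hS
    exact negSet_flipSet hπ hS
  · intro m hm
    rw [Finset.mem_filter] at hm
    have := flipSet_negSet hm.1
    rwa [hm.2] at this

end Fiber2


/-- `D : NC^B_2(2n) → NC^A_2(2n)` is a well-defined surjection, every
negative B-pair of `π` is mapped to an outer B-pair of `D(π)`, each fiber has cardinality
`#D⁻¹(π) = ∑_{i=0}^{#Out(π)} C(#Out(π), i) = 2^{#Out(π)}`, and `NC^B_2(2n)` is the disjoint
union of the fibers. -/
theorem Dmap_properties (n : ℕ) :
    (∀ m ∈ NCB (2 * n), Dmap m ∈ NCA (2 * n)) ∧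
    (∀ π ∈ NCA (2 * n), ∃ m ∈ NCB (2 * n), Dmap m = π) ∧
    (∀ m ∈ NCB (2 * n), ∀ b : SIdx (2 * n),
      isRep m b → sval (m b) < 0 → b ∈ OutB (Dmap m)) ∧
    (∀ π ∈ NCA (2 * n),
      ((NCB (2 * n)).filter fun m => Dmap m = π).card = 2 ^ (OutB π).card ∧
      ((NCB (2 * n)).filter fun m => Dmap m = π).card =
        ∑ i ∈ Finset.range ((OutB π).card + 1), ((OutB π).card).choose i) ∧
    NCB (2 * n) = (NCA (2 * n)).biUnion
      (fun π => (NCB (2 * n)).filter fun m => Dmap m = π) := by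
  refine ⟨fun m hm => Dmap_mem_NCA hm, ?_, ?_, ?_, ?_⟩
  · intro π hπ
    exact ⟨π, (mem_NCA_iff.1 hπ).1, Dmap_id hπ⟩
  · intro m hm b hb hneg
    exact neg_rep_outer hm hb hneg
  · intro π hπ
    refine ⟨fiber_card hπ, ?_⟩
    rw [fiber_card hπ, Nat.sum_range_choose]
  · ext m
    simp only [Finset.mem_biUnion, Finset.mem_filter]
    constructor
    · intro hm
      exact ⟨Dmap m, Dmap_mem_NCA hm, hm, rfl⟩
    · rintro ⟨π, hπ, hm, -⟩
      exact hm
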